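/- arXiv:2601.18969 — 2 statements merged into one kernel-verified Lean document; each statement's English description precedes it below -/
import Mathlib

section
/- Let H, W be real Hilbert spaces, K ⊆ H nonempty closed convex, ω > 0, A, A_h : H → W bounded linear, b ∈ W. Let u minimize J(v) = (1/2)‖A v - b‖² + (ω/2)‖v‖² over K and u_h minimize J_h(v) = (1/2)‖A_h v - b‖² + (ω/2)‖v‖² over K. Then ω‖u - u_h‖² + (1/2)‖A u - A_h u_h‖² ≤ (1/2)‖A u - A_h u‖² + ‖(A_h* - A*)(A u - b)‖ · ‖u - u_h‖. -/
open scoped RealInnerProductSpace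

/-- Variational inequality for a minimizer of a strongly convex quadratic over a convex set. -/
lemma vi_aux {H W : Type*} [NormedAddCommGroup H] [InnerProductSpace ℝ H]
    [NormedAddCommGroup W] [InnerProductSpace ℝ W]
    (K : Set H) (hKcv : Convex ℝ K)
    {ω : ℝ} (hω : 0 < ω) (A : H →L[ℝ] W) (b : W)
    {u : H} (hu : u ∈ K)
    (hmin : ∀ v ∈ K, (1/2) * ‖A u - b‖^2 + (ω/2) * ‖u‖^2 ≤ (1/2) * ‖A v - b‖^2 + (ω/2) * ‖v‖^2)
    {v : H} (hv : v ∈ K) :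
    0 ≤ ⟪A u - b, A v - A u⟫ + ω * ⟪u, v - u⟫ := by
  set L : ℝ := ⟪A u - b, A v - A u⟫ + ω * ⟪u, v - u⟫ with hL
  set Q : ℝ := (1/2) * ‖A v - A u‖^2 + (ω/2) * ‖v - u‖^2 with hQdef
  clear_value L Q
  have hQ : 0 ≤ Q := by rw [hQdef]; positivity
  have key : ∀ t : ℝ, 0 < t → t ≤ 1 → 0 ≤ L + t * Q := by
    intro t ht ht1
    have hmem : u + t • (v - u) ∈ K := by
      have h := hKcv hu hv (by linarith : (0:ℝ) ≤ 1 - t) ht.le (by ring)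
      have he : (1 - t) • u + t • v = u + t • (v - u) := by module
      rwa [he] at h
    have h2 := hmin _ hmem
    have e1 : A (u + t • (v - u)) - b = (A u - b) + t • (A v - A u) := by
      rw [map_add, map_smul, map_sub]; module
    rw [e1] at h2
    have n1 : ‖(A u - b) + t • (A v - A u)‖^2
        = ‖A u - b‖^2 + 2 * (t * ⟪A u - b, A v - A u⟫) + t^2 * ‖A v - A u‖^2 := by
      rw [norm_add_sq_real, real_inner_smul_right, norm_smul, Real.norm_eq_abs,
        abs_of_pos ht, mul_pow]
    have n2 : ‖u + t • (v - u)‖^2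
        = ‖u‖^2 + 2 * (t * ⟪u, v - u⟫) + t^2 * ‖v - u‖^2 := by
      rw [norm_add_sq_real, real_inner_smul_right, norm_smul, Real.norm_eq_abs,
        abs_of_pos ht, mul_pow]
    rw [n1, n2] at h2
    have h3 : 0 ≤ t * (L + t * Q) := by rw [hL, hQdef]; nlinarith [h2]
    nlinarith [h3, ht]
  by_contra hneg
  push_neg at hneg
  rcases eq_or_lt_of_le hQ with hQ0 | hQpos
  · have := key 1 one_pos le_rfl
    rw [← hQ0] at this
    linarith
  · obtain ⟨t, htpos, ht1, htle⟩ : ∃ t : ℝ, 0 < t ∧ t ≤ 1 ∧ t ≤ -L / (2 * Q) :=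
      ⟨min 1 (-L / (2 * Q)), lt_min one_pos (div_pos (by linarith) (by linarith)),
        min_le_left _ _, min_le_right _ _⟩
    have h4 := key t htpos ht1
    have h5 : t * Q ≤ -L / 2 := by
      have h6 := mul_le_mul_of_nonneg_right htle hQ
      have h7 : -L / (2 * Q) * Q = -L / 2 := by
        field_simp
      linarith [h7 ▸ h6]
    linarith [h4, h5, hneg]

theorem stmt_6 {H W : Type*} [NormedAddCommGroup H] [InnerProductSpace ℝ H] [CompleteSpace H]
    [NormedAddCommGroup W] [InnerProductSpace ℝ W] [CompleteSpace W]
    (K : Set H) (hKne : K.Nonempty) (hKcl : IsClosed K) (hKcv : Convex ℝ K)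
    (ω : ℝ) (hω : 0 < ω) (A Ah : H →L[ℝ] W) (b : W)
    (u uh : H) (hu : u ∈ K) (huh : uh ∈ K)
    (hmin : ∀ v ∈ K, (1/2) * ‖A u - b‖^2 + (ω/2) * ‖u‖^2 ≤ (1/2) * ‖A v - b‖^2 + (ω/2) * ‖v‖^2)
    (hminh : ∀ v ∈ K, (1/2) * ‖Ah uh - b‖^2 + (ω/2) * ‖uh‖^2 ≤ (1/2) * ‖Ah v - b‖^2 + (ω/2) * ‖v‖^2) :
    ω * ‖u - uh‖^2 + (1/2) * ‖A u - Ah uh‖^2 ≤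
      (1/2) * ‖A u - Ah u‖^2 +
        ‖(ContinuousLinearMap.adjoint Ah - ContinuousLinearMap.adjoint A) (A u - b)‖ * ‖u - uh‖ := by
  have h1 := vi_aux K hKcv hω A b hu hmin huh
  have h2 := vi_aux K hKcv hω Ah b huh hminh hu
  -- sum of the ω-terms
  have esum : ⟪u, uh - u⟫ + ⟪uh, u - uh⟫ = -‖u - uh‖^2 := by
    rw [← real_inner_self_eq_norm_sq]
    simp only [inner_sub_left, inner_sub_right]
    rw [real_inner_comm uh u]
    ring
  have hsum : ω * ‖u - uh‖^2 ≤ ⟪A u - b, A uh - A u⟫ + ⟪Ah uh - b, Ah u - Ah uh⟫ := by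
    nlinarith [h1, h2, esum]
  -- key algebraic identity
  have hadj : ⟪A u - b, A uh - A u⟫ + ⟪Ah uh - b, Ah u - Ah uh⟫
      = ⟪(ContinuousLinearMap.adjoint Ah - ContinuousLinearMap.adjoint A) (A u - b), u - uh⟫
        + ⟪Ah uh - A u, Ah u - A u⟫ - ‖A u - Ah uh‖^2 := by
    rw [← real_inner_self_eq_norm_sq]
    simp only [ContinuousLinearMap.sub_apply, inner_sub_left, inner_sub_right,
      ContinuousLinearMap.adjoint_inner_left]
    rw [real_inner_comm (Ah uh) (A u)]
    ring
  have hcs1 : ⟪(ContinuousLinearMap.adjoint Ah - ContinuousLinearMap.adjoint A) (A u - b), u - uh⟫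
      ≤ ‖(ContinuousLinearMap.adjoint Ah - ContinuousLinearMap.adjoint A) (A u - b)‖ * ‖u - uh‖ :=
    real_inner_le_norm _ _
  have hcs2 : ⟪Ah uh - A u, Ah u - A u⟫ ≤ (1/2) * ‖A u - Ah uh‖^2 + (1/2) * ‖A u - Ah u‖^2 := by
    have h := real_inner_le_norm (Ah uh - A u) (Ah u - A u)
    rw [norm_sub_rev (Ah uh) (A u), norm_sub_rev (Ah u) (A u)] at h
    nlinarith [sq_nonneg (‖A u - Ah uh‖ - ‖A u - Ah u‖)]
  linarith [hsum, hadj ▸ hsum, hcs1, hcs2, hadj]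
end

section
/- Let H, W be Hilbert spaces, ω > 0, A, A_h : H → W bounded linear with ‖A - A_h‖ ≤ δ, b ∈ W, K nonempty closed convex and bounded with ‖v‖ ≤ M for all v ∈ K. If u minimizes J(v) = (1/2)‖Av - b‖² + (ω/2)‖v‖² over K and u_h minimizes J_h(v) = (1/2)‖A_h v - b‖² + (ω/2)‖v‖² over K, then ω‖u - u_h‖² ≤ δ·(‖A‖·M + ‖A_h‖·M + 2‖b‖)·‖u - u_h‖, hence ‖u - u_h‖ ≤ (δ/ω)(M(‖A‖ + ‖A_h‖) + 2‖b‖). -/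
open scoped RealInnerProductSpace


lemma my_vi {H W : Type*} [NormedAddCommGroup H] [InnerProductSpace ℝ H]
    [NormedAddCommGroup W] [InnerProductSpace ℝ W]
    (K : Set H) (hKcv : Convex ℝ K) (ω : ℝ) (hω : 0 ≤ ω) (B : H →L[ℝ] W) (b : W)
    (u : H) (hu : u ∈ K)
    (hmin : ∀ v ∈ K, (1/2) * ‖B u - b‖^2 + (ω/2) * ‖u‖^2 ≤ (1/2) * ‖B v - b‖^2 + (ω/2) * ‖v‖^2)
    (v : H) (hv : v ∈ K) :
    0 ≤ ⟪B u - b, B (v - u)⟫ + ω * ⟪u, v - u⟫ := by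
  set g : ℝ := ⟪B u - b, B (v - u)⟫ + ω * ⟪u, v - u⟫ with hg
  set c : ℝ := (1/2) * ‖B (v - u)‖^2 + (ω/2) * ‖v - u‖^2 + 1 with hc
  have key : ∀ t : ℝ, 0 < t → t ≤ 1 → 0 ≤ g + t * c := by
    intro t ht ht1
    have hp : u + t • (v - u) ∈ K := by
      have h := hKcv hu hv (by linarith : (0:ℝ) ≤ 1 - t) ht.le (by ring)
      have : (1 - t) • u + t • v = u + t • (v - u) := by
        rw [smul_sub, sub_smul, one_smul]; abel
      rwa [this] at h
    have hm := hmin _ hp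
    have e1 : B (u + t • (v - u)) - b = (B u - b) + t • B (v - u) := by
      rw [map_add, map_smul]; abel
    rw [e1, norm_add_sq_real] at hm
    have e2 : ‖u + t • (v - u)‖^2 = ‖u‖^2 + 2 * (t * ⟪u, v - u⟫) + t^2 * ‖v - u‖^2 := by
      rw [norm_add_sq_real, real_inner_smul_right, norm_smul, Real.norm_eq_abs, mul_pow, sq_abs]
    rw [e2] at hm
    have e3 : ⟪B u - b, t • B (v - u)⟫ = t * ⟪B u - b, B (v - u)⟫ :=
      real_inner_smul_right _ _ _
    rw [e3, norm_smul, Real.norm_eq_abs, mul_pow, sq_abs] at hm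
    have ht2 : t^2 ≤ t := by nlinarith
    have hcc : 0 ≤ c - 1 := by
      rw [hc]
      nlinarith [sq_nonneg ‖B (v - u)‖, mul_nonneg hω (sq_nonneg ‖v - u‖)]
    have h1 : 0 ≤ t * g + t^2 * (c - 1) := by rw [hg, hc]; nlinarith
    have h2 : 0 ≤ t * (g + t * c) := by nlinarith [sq_nonneg t]
    exact le_of_mul_le_mul_left (by linarith [h2] : t * 0 ≤ t * (g + t * c)) ht
  have hcpos : (0:ℝ) < c := by
    rw [hc]
    nlinarith [sq_nonneg ‖B (v - u)‖, mul_nonneg hω (sq_nonneg ‖v - u‖)]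
  refine le_of_forall_pos_le_add fun ε hε => ?_
  have htpos : 0 < min 1 (ε / c) := lt_min one_pos (div_pos hε hcpos)
  have hk := key _ htpos (min_le_left _ _)
  have htc : min 1 (ε / c) * c ≤ ε := by
    have := min_le_right 1 (ε / c)
    calc min 1 (ε / c) * c ≤ (ε / c) * c := mul_le_mul_of_nonneg_right (min_le_right _ _) hcpos.le
    _ = ε := div_mul_cancel₀ _ (ne_of_gt hcpos)
  linarith

theorem stmt_14 {H W : Type*} [NormedAddCommGroup H] [InnerProductSpace ℝ H] [CompleteSpace H]
    [NormedAddCommGroup W] [InnerProductSpace ℝ W] [CompleteSpace W]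
    (K : Set H) (hKne : K.Nonempty) (hKcl : IsClosed K) (hKcv : Convex ℝ K)
    (M : ℝ) (hKbd : ∀ v ∈ K, ‖v‖ ≤ M)
    (ω : ℝ) (hω : 0 < ω) (A Ah : H →L[ℝ] W) (δ : ℝ) (hδ : ‖A - Ah‖ ≤ δ) (b : W)
    (u uh : H) (hu : u ∈ K) (huh : uh ∈ K)
    (hmin : ∀ v ∈ K, (1/2) * ‖A u - b‖^2 + (ω/2) * ‖u‖^2 ≤ (1/2) * ‖A v - b‖^2 + (ω/2) * ‖v‖^2)
    (hminh : ∀ v ∈ K, (1/2) * ‖Ah uh - b‖^2 + (ω/2) * ‖uh‖^2 ≤ (1/2) * ‖Ah v - b‖^2 + (ω/2) * ‖v‖^2) :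
    ω * ‖u - uh‖^2 ≤ δ * (‖A‖ * M + ‖Ah‖ * M + 2 * ‖b‖) * ‖u - uh‖ ∧
    ‖u - uh‖ ≤ (δ/ω) * (M * (‖A‖ + ‖Ah‖) + 2 * ‖b‖) := by
  have hδ0 : 0 ≤ δ := le_trans (norm_nonneg _) hδ
  obtain ⟨v0, hv0⟩ := hKne
  have hM0 : 0 ≤ M := (norm_nonneg v0).trans (hKbd v0 hv0)
  have hAhA : ‖Ah - A‖ ≤ δ := by rwa [norm_sub_rev]
  set w : H := u - uh with hwdef
  have h1 := my_vi K hKcv ω hω.le A b u hu hmin uh huh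
  have h2 := my_vi K hKcv ω hω.le Ah b uh huh hminh u hu
  -- rewrite h1 in terms of w
  have hneg : uh - u = -w := by rw [hwdef]; abel
  rw [hneg, map_neg, inner_neg_right, inner_neg_right] at h1
  have hpos : u - uh = w := rfl
  rw [hpos] at h2
  -- h1 : 0 ≤ -⟪A u - b, A w⟫ + ω * -⟪u, w⟫
  -- h2 : 0 ≤ ⟪Ah uh - b, Ah w⟫ + ω * ⟪uh, w⟫
  have e0 : ω * ‖w‖^2 = ω * ⟪u, w⟫ - ω * ⟪uh, w⟫ := by
    rw [← real_inner_self_eq_norm_sq, hwdef, inner_sub_left]; ring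
  have h3 : ω * ‖w‖^2 ≤ ⟪Ah uh - b, Ah w⟫ - ⟪A u - b, A w⟫ := by
    rw [e0]; linarith
  have huhw : Ah uh = Ah u - Ah w := by rw [← map_sub]; congr 1; rw [hwdef]; abel
  have hid : ⟪Ah uh - b, Ah w⟫ - ⟪A u - b, A w⟫
      = ⟪(Ah - A) u, Ah w⟫ + ⟪A u - b, (Ah - A) w⟫ - ⟪Ah w, Ah w⟫ := by
    rw [huhw]
    simp only [ContinuousLinearMap.sub_apply, inner_sub_left, inner_sub_right]
    ring
  have bound1 : ‖(Ah - A) u‖ ≤ δ * M :=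
    le_trans ((Ah - A).le_opNorm u)
      (mul_le_mul hAhA (hKbd u hu) (norm_nonneg u) hδ0)
  have bound2 : ‖Ah w‖ ≤ ‖Ah‖ * ‖w‖ := Ah.le_opNorm w
  have bound3 : ‖A u - b‖ ≤ ‖A‖ * M + ‖b‖ := by
    calc ‖A u - b‖ ≤ ‖A u‖ + ‖b‖ := norm_sub_le _ _
    _ ≤ ‖A‖ * ‖u‖ + ‖b‖ := by linarith [A.le_opNorm u]
    _ ≤ ‖A‖ * M + ‖b‖ := by
        have := mul_le_mul_of_nonneg_left (hKbd u hu) (norm_nonneg A); linarith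
  have bound4 : ‖(Ah - A) w‖ ≤ δ * ‖w‖ :=
    le_trans ((Ah - A).le_opNorm w)
      (mul_le_mul_of_nonneg_right hAhA (norm_nonneg w))
  have hb1 : ⟪(Ah - A) u, Ah w⟫ ≤ (δ * M) * (‖Ah‖ * ‖w‖) :=
    le_trans (real_inner_le_norm _ _)
      (mul_le_mul bound1 bound2 (norm_nonneg _) (by positivity))
  have hb2 : ⟪A u - b, (Ah - A) w⟫ ≤ (‖A‖ * M + ‖b‖) * (δ * ‖w‖) :=
    le_trans (real_inner_le_norm _ _)
      (mul_le_mul bound3 bound4 (norm_nonneg _) (by positivity))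
  have hAw : 0 ≤ ⟪Ah w, Ah w⟫ := real_inner_self_nonneg
  have hslack : 0 ≤ δ * (‖b‖ * ‖w‖) := by positivity
  have part1 : ω * ‖w‖^2 ≤ δ * (‖A‖ * M + ‖Ah‖ * M + 2 * ‖b‖) * ‖w‖ := by
    have hr : (δ * M) * (‖Ah‖ * ‖w‖) + (‖A‖ * M + ‖b‖) * (δ * ‖w‖) + δ * (‖b‖ * ‖w‖)
        = δ * (‖A‖ * M + ‖Ah‖ * M + 2 * ‖b‖) * ‖w‖ := by ring
    linarith [hid ▸ h3]
  refine ⟨part1, ?_⟩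
  have hC0 : 0 ≤ ‖A‖ * M + ‖Ah‖ * M + 2 * ‖b‖ := by positivity
  rcases eq_or_lt_of_le (norm_nonneg w) with hr0 | hr0
  · rw [← hr0]
    have := mul_nonneg (div_nonneg hδ0 hω.le)
      (by nlinarith : (0:ℝ) ≤ M * (‖A‖ + ‖Ah‖) + 2 * ‖b‖)
    linarith
  · have heq : (δ/ω) * (M * (‖A‖ + ‖Ah‖) + 2 * ‖b‖)
        = (δ * (‖A‖ * M + ‖Ah‖ * M + 2 * ‖b‖)) / ω := by ring
    rw [heq, le_div_iff₀ hω]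
    have := le_of_mul_le_mul_right (by nlinarith : ω * ‖w‖ * ‖w‖ ≤ δ * (‖A‖ * M + ‖Ah‖ * M + 2 * ‖b‖) * ‖w‖) hr0
    linarith
end
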